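/- Let C be a cycle of even length at least 8 in a complete r-partite graph G. If C does not contain two adjacent odd chords, then every even chord of C with split at least 4 exists in G; that is, any two vertices of C whose distance along C is even and at least 4 are adjacent in G. -/
import Mathlib


variable {V : Type*} [Fintype V] [DecidableEq V]

/-- `M` is a perfect matching of `G`: every edge of `M` is an edge of `G`,
and every vertex lies in exactly one edge of `M`. -/
def IsPM (G : SimpleGraph V) (M : Finset (Sym2 V)) : Prop :=
  (∀ e ∈ M, e ∈ G.edgeSet) ∧ ∀ v : V, ∃! e, e ∈ M ∧ v ∈ e

/-- The `M`-induced weight of an edge, for the coloring `c` (`true` = red):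
`-1` for red matching edges, `+1` for red non-matching edges, `0` for blue edges. -/
def wt (c : Sym2 V → Bool) (M : Finset (Sym2 V)) (e : Sym2 V) : ℤ :=
  if c e then (if e ∈ M then -1 else 1) else 0

/-- Number of red edges of a finite edge set. -/
def redCount (c : Sym2 V → Bool) (F : Finset (Sym2 V)) : ℕ :=
  (F.filter (fun e => c e = true)).card

/-- A walk is `M`-alternating if consecutive edges have opposite membership in `M`. -/
def IsAlt (M : Finset (Sym2 V)) {G : SimpleGraph V} {u v : V} (P : G.Walk u v) : Prop :=
  P.edges.Chain' (fun e f => (e ∈ M) ↔ f ∉ M)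

/-- The `i`-th vertex (cyclically, indices mod `C.length`) along a closed walk `C`. -/
def cvtx {G : SimpleGraph V} {v : V} (C : G.Walk v v) (i : ℕ) : V :=
  C.support.tail.getD (i % C.length) v

/-- Positions `i, j` on the cycle `C` carry a chord: the corresponding vertices are
adjacent in `G` but the edge is not an edge of `C`. -/
def IsChordAt {G : SimpleGraph V} {v : V} (C : G.Walk v v) (i j : ℕ) : Prop :=
  G.Adj (cvtx C i) (cvtx C j) ∧ s(cvtx C i, cvtx C j) ∉ C.edges

/-- `C` has an odd chord: a chord splitting `C` into two odd-length paths. -/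
def HasOddChord {G : SimpleGraph V} {v : V} (C : G.Walk v v) : Prop :=
  ∃ i j : ℕ, i < j ∧ j < C.length ∧ Odd (j - i) ∧ IsChordAt C i j

/-- `C` has two adjacent odd chords: chords `{u,v₀} = {cvtx i, cvtx (i+d)}` and
`{x,y} = {cvtx (i+d+1), cvtx (i+n-1)}` whose endpoints appear in cyclic order
`u, v₀, x, y` with `{v₀,x}` and `{y,u}` edges of `C`, both chords odd. -/
def HasTwoAdjOddChords {G : SimpleGraph V} {v : V} (C : G.Walk v v) : Prop :=
  ∃ i d : ℕ, 1 ≤ d ∧ d + 3 ≤ C.length ∧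
    IsChordAt C i (i + d) ∧ (Odd d ∨ Odd (C.length - d)) ∧
    IsChordAt C (i + d + 1) (i + C.length - 1) ∧
    (Odd (C.length - d - 2) ∨ Odd (d + 2))

set_option linter.unusedSectionVars false
section Aux
open SimpleGraph

variable {G : SimpleGraph V}

lemma support_getD' {u w : V} (p : G.Walk u w) : ∀ (k : ℕ), k ≤ p.length →
    ∀ d : V, p.support.getD k d = p.getVert k := by
  induction p with
  | nil =>
      intro k hk d
      simp only [Walk.length_nil, Nat.le_zero] at hk
      subst hk
      simp [SimpleGraph.Walk.getVert]
  | cons h q ih =>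
      intro k hk d
      cases k with
      | zero => simp [SimpleGraph.Walk.getVert]
      | succ k =>
          rw [Walk.support_cons, List.getD_cons_succ, Walk.getVert_cons_succ]
          exact ih k (by simpa [Walk.length_cons] using hk) d

lemma edges_exists' {u w : V} (p : G.Walk u w) : ∀ {e : Sym2 V}, e ∈ p.edges →
    ∃ k, k < p.length ∧ e = s(p.getVert k, p.getVert (k+1)) := by
  induction p with
  | nil => intro e he; simp at he
  | cons h q ih =>
      intro e he
      rw [Walk.edges_cons, List.mem_cons] at he
      rcases he with he | he
      · exact ⟨0, by simp [Walk.length_cons], by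
          simp [he, Walk.getVert_zero, Walk.getVert_cons_succ]⟩
      · obtain ⟨k, hk, hke⟩ := ih he
        exact ⟨k+1, by simpa [Walk.length_cons] using Nat.succ_lt_succ hk,
          by simpa [Walk.getVert_cons_succ] using hke⟩

variable {v : V} {C : G.Walk v v}

lemma tail_getD_eq {p : ℕ} (hp : p < C.length) :
    C.support.tail.getD p v = C.getVert (p+1) := by
  rw [← support_getD' C (p+1) (by omega) v]
  conv_lhs => rw [show C.support.tail.getD p v = (v :: C.support.tail).getD (p+1) v from
    (List.getD_cons_succ).symm]
  rw [← C.support_eq_cons]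

lemma cvtx_eq (hn : 0 < C.length) (i : ℕ) :
    cvtx C i = C.getVert (i % C.length + 1) :=
  tail_getD_eq (Nat.mod_lt _ hn)

lemma cvtx_congr {a b : ℕ} (h : a % C.length = b % C.length) : cvtx C a = cvtx C b := by
  unfold cvtx; rw [h]

lemma getVert_inj (hC : C.IsCycle) {p q : ℕ} (hp : p < C.length) (hq : q < C.length)
    (h : C.getVert (p+1) = C.getVert (q+1)) : p = q := by
  have htl : C.support.tail.length = C.length := by
    rw [List.length_tail, Walk.length_support]; omega
  rw [← tail_getD_eq hp, ← tail_getD_eq hq] at h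
  rw [List.getD_eq_getElem _ _ (by omega), List.getD_eq_getElem _ _ (by omega)] at h
  exact (hC.2.getElem_inj_iff).mp h

lemma cvtx_adj (hn : 1 < C.length) (i : ℕ) :
    G.Adj (cvtx C i) (cvtx C (i+1)) := by
  have hn0 : 0 < C.length := by omega
  rw [cvtx_eq hn0, cvtx_eq hn0]
  have hm1 : i % C.length < C.length := Nat.mod_lt _ hn0
  have h2 : (i+1) % C.length = (i % C.length + 1) % C.length := by
    rw [Nat.add_mod, Nat.mod_eq_of_lt hn]
  by_cases hcase : i % C.length + 1 < C.length
  · rw [h2, Nat.mod_eq_of_lt hcase]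
    exact C.adj_getVert_succ hcase
  · have he : i % C.length + 1 = C.length := by omega
    rw [h2, he, Nat.mod_self, Walk.getVert_length, Nat.zero_add]
    have := C.adj_getVert_succ hn0
    rwa [Walk.getVert_zero] at this

lemma chord_not_edge (hC : C.IsCycle) {a b : ℕ} (ha : a < C.length) (hb : b < C.length)
    (hab : a < b) (h2 : 2 ≤ b - a) (h2' : b - a ≤ C.length - 2) :
    s(cvtx C a, cvtx C b) ∉ C.edges := by
  intro hmem
  have hn0 : 0 < C.length := by omega
  obtain ⟨k, hk, hke⟩ := edges_exists' C hmem
  rw [cvtx_eq hn0, cvtx_eq hn0, Nat.mod_eq_of_lt ha, Nat.mod_eq_of_lt hb, Sym2.eq_iff] at hke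
  rcases hke with ⟨hxa, hyb⟩ | ⟨hxa, hyb⟩
  · -- getVert (a+1) = getVert k, getVert (b+1) = getVert (k+1)
    have hbk : b = k := getVert_inj hC hb hk hyb
    rw [show k = (k - 1) + 1 by omega] at hxa
    have := getVert_inj hC ha (by omega) hxa
    omega
  · -- getVert (a+1) = getVert (k+1), getVert (b+1) = getVert k
    have hak : a = k := getVert_inj hC ha hk hxa
    rcases Nat.eq_zero_or_pos k with hk0 | hk1
    · rw [hk0, Walk.getVert_zero] at hyb
      have hyb' : C.getVert (b+1) = C.getVert ((C.length - 1) + 1) := by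
        rw [show C.length - 1 + 1 = C.length by omega, Walk.getVert_length]; exact hyb
      have := getVert_inj hC hb (by omega) hyb'
      omega
    · rw [show k = (k - 1) + 1 by omega] at hyb
      have := getVert_inj hC hb (by omega) hyb
      omega

end Aux

/-- in a complete `r`-partite graph, an even cycle of length at
least 8 without two adjacent odd chords has all even chords with split at least 4:
any two vertices of `C` at even distance at least 4 (on both arcs) along `C` are
adjacent in `G`. -/
theorem stmt_15 (G : SimpleGraph V) (r : ℕ) (part : V → Fin r)
    (hpart : ∀ u w : V, G.Adj u w ↔ part u ≠ part w)
    (v : V) (C : G.Walk v v) (hC : C.IsCycle)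
    (heven : Even C.length) (hlen : 8 ≤ C.length)
    (hno : ¬ HasTwoAdjOddChords C) :
    ∀ i j : ℕ, i < j → j < C.length → Even (j - i) →
      4 ≤ j - i → j - i ≤ C.length - 4 → G.Adj (cvtx C i) (cvtx C j) := by
  intro i j hij hjn hev h4 hsplit
  have hn0 : 0 < C.length := by omega
  have hin : i < C.length := lt_trans hij hjn
  by_contra hadj
  have hpp : part (cvtx C i) = part (cvtx C j) := by
    by_contra hne; exact hadj ((hpart _ _).mpr hne)
  apply hno
  refine ⟨i, j - i - 1, by omega, by omega, ?_, ?_, ?_, ?_⟩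
  · -- chord at (i, j-1)
    rw [show i + (j - i - 1) = j - 1 by omega]
    constructor
    · have hadj1 : G.Adj (cvtx C (j-1)) (cvtx C j) := by
        have h := cvtx_adj (C := C) (by omega) (j-1)
        rwa [show j - 1 + 1 = j by omega] at h
      have hne : part (cvtx C (j-1)) ≠ part (cvtx C j) := (hpart _ _).mp hadj1
      exact (hpart _ _).mpr (fun h => hne (h.symm.trans hpp))
    · exact chord_not_edge hC hin (by omega) (by omega) (by omega) (by omega)
  · exact Or.inl (Nat.Even.sub_odd (by omega) hev odd_one)
  · -- chord at (j, i + n - 1)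
    rw [show i + (j - i - 1) + 1 = j by omega]
    have hadj2 : G.Adj (cvtx C (i + C.length - 1)) (cvtx C i) := by
      have h := cvtx_adj (C := C) (by omega) (i + C.length - 1)
      rwa [show i + C.length - 1 + 1 = i + C.length by omega,
        cvtx_congr (show (i + C.length) % C.length = i % C.length from
          Nat.add_mod_right i C.length)] at h
    constructor
    · have hne := (hpart _ _).mp hadj2
      exact (hpart _ _).mpr (fun h => hne (h.symm.trans hpp.symm))
    · have hmod : cvtx C (i + C.length - 1)
          = cvtx C ((i + C.length - 1) % C.length) := cvtx_congr (Nat.mod_mod_of_dvd _ dvd_rfl).symm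
      rcases Nat.eq_zero_or_pos i with hi0 | hi1
      · subst hi0
        rw [hmod, show (0 + C.length - 1) % C.length = C.length - 1 from by
          rw [Nat.zero_add]; exact Nat.mod_eq_of_lt (by omega)]
        exact chord_not_edge hC hjn (by omega) (by omega) (by omega) (by omega)
      · rw [hmod, show (i + C.length - 1) % C.length = i - 1 from by
          rw [show i + C.length - 1 = (i - 1) + C.length by omega, Nat.add_mod_right]
          exact Nat.mod_eq_of_lt (by omega)]
        rw [Sym2.eq_swap]
        exact chord_not_edge hC (by omega) hjn (by omega) (by omega) (by omega)
  · exact Or.inr (by rw [show j - i - 1 + 2 = (j - i) + 1 by omega]; exact hev.add_one)
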